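/- Let b = (b₁,…,b_N) ∈ (K^×)^N satisfy: whenever b_i ≠ b_j, the ratio b_i/b_j is not an integer power of q. Let W_J = {w ∈ S_N : b_{w(i)} = b_i for all i} be the stabilizer of b in S_N, and let Γ_J ⊆ D be the subalgebra generated by Y₁^{±1},…,Y_N^{±1} and the elements s_w for w ∈ W_J. For a K[W_J]-module S, let b ⊠ S denote the Γ_J-module with underlying space S on which each s_w (w ∈ W_J) acts by w and each Y_i acts by the scalar b_i (this is well defined since W_J stabilizes b). If S is a simple K[W_J]-module, then the induced module D ⊗_{Γ_J} (b ⊠ S) is a simple left D-module. -/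

import Mathlib

/-!
Statement 14: Let `K` be a field of characteristic zero, `q ∈ K^×` not a root
of unity, and `D = D_q(H) # S_N` the smash product of the quantum torus with
the symmetric group.  Let `b ∈ (K^×)^N` be such that whenever `b_i ≠ b_j` the
ratio `b_i/b_j` is not an integer power of `q`, let `W_J ⊆ S_N` be the
stabilizer of `b`, and let `Γ_J ⊆ D` be the subalgebra generated by `Y_i^{±1}`
and the `s_w` for `w ∈ W_J`.  For a `K[W_J]`-module `S`, let `b ⊠ S` be the
`Γ_J`-module with underlying space `S` on which `s_w` acts by `w` and `Y_i` by
the scalar `b_i`.  If `S` is a simple `K[W_J]`-module, then `D ⊗_{Γ_J} (b ⊠ S)`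
is a simple left `D`-module.

The relative tensor product `D ⊗_{Γ_J} (b ⊠ S)` is realized as the quotient of
`D ⊗_K S` by the `D`-submodule spanned by the elements `d·γ ⊗ s − d ⊗ γ·s`
for `γ` ranging over the generators `Y_i`, `Y_i^{-1}`, `s_w` (`w ∈ W_J`) of
`Γ_J`.
-/

noncomputable section

/-- Generators of the smash product `D = D_q(H) # S_N`. -/
inductive SGen (N : ℕ) : Type
  | X : Fin N → SGen N
  | Xinv : Fin N → SGen N
  | Y : Fin N → SGen N
  | Yinv : Fin N → SGen N
  | S : Equiv.Perm (Fin N) → SGen N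

/-- The generator embedding into the free algebra. -/
def sg (K : Type) [Field K] {N : ℕ} (g : SGen N) : FreeAlgebra K (SGen N) :=
  FreeAlgebra.ι K g

/-- The defining relations of the smash product `D_q(H) # S_N`. -/
inductive SRel (K : Type) [Field K] (N : ℕ) (q : Kˣ) :
    FreeAlgebra K (SGen N) → FreeAlgebra K (SGen N) → Prop
  | XX (i j : Fin N) :
      SRel K N q (sg K (.X i) * sg K (.X j)) (sg K (.X j) * sg K (.X i))
  | XXinv (i : Fin N) : SRel K N q (sg K (.X i) * sg K (.Xinv i)) 1
  | XinvX (i : Fin N) : SRel K N q (sg K (.Xinv i) * sg K (.X i)) 1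
  | YY (i j : Fin N) :
      SRel K N q (sg K (.Y i) * sg K (.Y j)) (sg K (.Y j) * sg K (.Y i))
  | YYinv (i : Fin N) : SRel K N q (sg K (.Y i) * sg K (.Yinv i)) 1
  | YinvY (i : Fin N) : SRel K N q (sg K (.Yinv i) * sg K (.Y i)) 1
  | YXne (i j : Fin N) (h : i ≠ j) :
      SRel K N q (sg K (.Y i) * sg K (.X j)) (sg K (.X j) * sg K (.Y i))
  | YXeq (i : Fin N) :
      SRel K N q (sg K (.Y i) * sg K (.X i)) ((q : K) • (sg K (.X i) * sg K (.Y i)))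
  | Smul (w w' : Equiv.Perm (Fin N)) :
      SRel K N q (sg K (.S w) * sg K (.S w')) (sg K (.S (w * w')))
  | Sone : SRel K N q (sg K (.S 1)) 1
  | SX (w : Equiv.Perm (Fin N)) (i : Fin N) :
      SRel K N q (sg K (.S w) * sg K (.X i)) (sg K (.X (w i)) * sg K (.S w))
  | SY (w : Equiv.Perm (Fin N)) (i : Fin N) :
      SRel K N q (sg K (.S w) * sg K (.Y i)) (sg K (.Y (w i)) * sg K (.S w))

/-- The smash product `D = D_q(H) # S_N`, presented by generators and relations. -/
abbrev SmashD (K : Type) [Field K] (N : ℕ) (q : Kˣ) := RingQuot (SRel K N q)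

/-- The element `Y_i` of `D`. -/
def Ye (K : Type) [Field K] {N : ℕ} (q : Kˣ) (i : Fin N) : SmashD K N q :=
  RingQuot.mkAlgHom K (SRel K N q) (sg K (.Y i))

/-- The element `Y_i^{-1}` of `D`. -/
def YeInv (K : Type) [Field K] {N : ℕ} (q : Kˣ) (i : Fin N) : SmashD K N q :=
  RingQuot.mkAlgHom K (SRel K N q) (sg K (.Yinv i))

/-- The element `s_w` of `D`. -/
def Se (K : Type) [Field K] {N : ℕ} (q : Kˣ) (w : Equiv.Perm (Fin N)) : SmashD K N q :=
  RingQuot.mkAlgHom K (SRel K N q) (sg K (.S w))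

/-- The stabilizer `W_J = {w ∈ S_N : b_{w(i)} = b_i for all i}` of `b` in `S_N`. -/
def permStab (K : Type) [Field K] (N : ℕ) (b : Fin N → Kˣ) :
    Subgroup (Equiv.Perm (Fin N)) where
  carrier := {w | ∀ i, b (w i) = b i}
  one_mem' := fun i => rfl
  mul_mem' := by
    intro w w' hw hw' i
    rw [Equiv.Perm.mul_apply, hw, hw']
  inv_mem' := by
    intro w hw i
    have := hw (w⁻¹ i)
    rw [← Equiv.Perm.mul_apply, mul_inv_cancel, Equiv.Perm.one_apply] at this
    exact this.symm

/-- The additive group structure of `D` (coming from its ring structure), registered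
so that instance search finds it for the quotient below. -/
instance SmashD.instAddCommGroup (K : Type) [Field K] (N : ℕ) (q : Kˣ) :
    AddCommGroup (SmashD K N q) :=
  Ring.toAddCommGroup

open scoped TensorProduct

/-- The `D`-submodule of `D ⊗_K S` spanned by the relations `d·γ ⊗ s − d ⊗ γ·s`
for `γ` among the generators `Y_i`, `Y_i^{-1}`, `s_w` (`w ∈ W_J`) of `Γ_J`,
acting on `b ⊠ S` (with `Y_i^{±1}` acting by `b_i^{±1}` and `s_w` by `w`).
The quotient by it is the relative tensor product `D ⊗_{Γ_J} (b ⊠ S)`. -/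
def indRelb (K : Type) [Field K] (N : ℕ) (q : Kˣ) (b : Fin N → Kˣ) (S : Type)
    [AddCommGroup S] [Module K S] [DistribMulAction ↥(permStab K N b) S]
    [SMulCommClass ↥(permStab K N b) K S] :
    Submodule (SmashD K N q) (SmashD K N q ⊗[K] S) :=
  Submodule.span (SmashD K N q)
    ({x | ∃ (d : SmashD K N q) (i : Fin N) (s : S),
        x = (d * Ye K q i) ⊗ₜ[K] s - d ⊗ₜ[K] ((b i : K) • s)} ∪
     {x | ∃ (d : SmashD K N q) (i : Fin N) (s : S),
        x = (d * YeInv K q i) ⊗ₜ[K] s - d ⊗ₜ[K] ((((b i)⁻¹ : Kˣ) : K) • s)} ∪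
     {x | ∃ (d : SmashD K N q) (w : ↥(permStab K N b)) (s : S),
        x = (d * Se K q (w : Equiv.Perm (Fin N))) ⊗ₜ[K] s - d ⊗ₜ[K] (w • s)})

-- ===== our auxiliary development =====
theorem Equiv.Perm.apply_inv_self {α : Type*} (f : Equiv.Perm α) (x : α) : f (f⁻¹ x) = x :=
  f.apply_symm_apply x
theorem Equiv.Perm.inv_apply_self {α : Type*} (f : Equiv.Perm α) (x : α) : f⁻¹ (f x) = x :=
  f.symm_apply_apply x

namespace St14

variable {K : Type} [Field K] {N : ℕ} {q : Kˣ}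

def Xe (K : Type) [Field K] {N : ℕ} (q : Kˣ) (i : Fin N) : SmashD K N q :=
  RingQuot.mkAlgHom K (SRel K N q) (sg K (.X i))
def XeInv (K : Type) [Field K] {N : ℕ} (q : Kˣ) (i : Fin N) : SmashD K N q :=
  RingQuot.mkAlgHom K (SRel K N q) (sg K (.Xinv i))

lemma mk_rel {x y : FreeAlgebra K (SGen N)} (h : SRel K N q x y) :
    RingQuot.mkAlgHom K (SRel K N q) x = RingQuot.mkAlgHom K (SRel K N q) y :=
  RingQuot.mkAlgHom_rel K h

lemma rel_XXinv (i : Fin N) : Xe K q i * XeInv K q i = 1 := by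
  simpa [Xe, XeInv, map_mul, map_one] using mk_rel (SRel.XXinv (K := K) (q := q) i)

lemma rel_XinvX (i : Fin N) : XeInv K q i * Xe K q i = 1 := by
  simpa [Xe, XeInv, map_mul, map_one] using mk_rel (SRel.XinvX (K := K) (q := q) i)

lemma rel_YYinv (i : Fin N) : Ye K q i * YeInv K q i = 1 := by
  simpa [Ye, YeInv, map_mul, map_one] using mk_rel (SRel.YYinv (K := K) (q := q) i)

lemma rel_YinvY (i : Fin N) : YeInv K q i * Ye K q i = 1 := by
  simpa [Ye, YeInv, map_mul, map_one] using mk_rel (SRel.YinvY (K := K) (q := q) i)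

lemma rel_XX (i j : Fin N) : Xe K q i * Xe K q j = Xe K q j * Xe K q i := by
  simpa [Xe, map_mul] using mk_rel (SRel.XX (K := K) (q := q) i j)

lemma rel_YXne {i j : Fin N} (h : i ≠ j) :
    Ye K q i * Xe K q j = Xe K q j * Ye K q i := by
  simpa [Xe, Ye, map_mul] using mk_rel (SRel.YXne (K := K) (q := q) i j h)

lemma rel_YXeq (i : Fin N) :
    Ye K q i * Xe K q i = (q : K) • (Xe K q i * Ye K q i) := by
  simpa [Xe, Ye, map_mul, map_smul] using mk_rel (SRel.YXeq (K := K) (q := q) i)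

lemma rel_Smul (w w' : Equiv.Perm (Fin N)) :
    Se K q w * Se K q w' = Se K q (w * w') := by
  simpa [Se, map_mul] using mk_rel (SRel.Smul (K := K) (q := q) w w')

lemma rel_Sone : Se K q (1 : Equiv.Perm (Fin N)) = 1 := by
  simpa [Se, map_one] using mk_rel (SRel.Sone (K := K) (N := N) (q := q))

lemma rel_SX (w : Equiv.Perm (Fin N)) (i : Fin N) :
    Se K q w * Xe K q i = Xe K q (w i) * Se K q w := by
  simpa [Se, Xe, map_mul] using mk_rel (SRel.SX (K := K) (q := q) w i)

lemma rel_SY (w : Equiv.Perm (Fin N)) (i : Fin N) :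
    Se K q w * Ye K q i = Ye K q (w i) * Se K q w := by
  simpa [Se, Ye, map_mul] using mk_rel (SRel.SY (K := K) (q := q) w i)

/-- the unit `X_i`. -/
def xu (K : Type) [Field K] {N : ℕ} (q : Kˣ) (i : Fin N) : (SmashD K N q)ˣ :=
  ⟨Xe K q i, XeInv K q i, rel_XXinv i, rel_XinvX i⟩

/-- the unit `Y_i`. -/
def yu (K : Type) [Field K] {N : ℕ} (q : Kˣ) (i : Fin N) : (SmashD K N q)ˣ :=
  ⟨Ye K q i, YeInv K q i, rel_YYinv i, rel_YinvY i⟩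

/-- the unit `s_w`. -/
def su (K : Type) [Field K] {N : ℕ} (q : Kˣ) (w : Equiv.Perm (Fin N)) : (SmashD K N q)ˣ :=
  ⟨Se K q w, Se K q w⁻¹, by rw [rel_Smul, mul_inv_cancel, rel_Sone],
    by rw [rel_Smul, inv_mul_cancel, rel_Sone]⟩

/-- the central unit `q`. -/
def qU (K : Type) [Field K] (N : ℕ) (q : Kˣ) : (SmashD K N q)ˣ :=
  Units.map (algebraMap K (SmashD K N q) : K →* SmashD K N q) q

@[simp] lemma xu_val (i : Fin N) : ((xu K q i : (SmashD K N q)ˣ) : SmashD K N q) = Xe K q i := rfl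
@[simp] lemma yu_val (i : Fin N) : ((yu K q i : (SmashD K N q)ˣ) : SmashD K N q) = Ye K q i := rfl
@[simp] lemma su_val (w : Equiv.Perm (Fin N)) :
    ((su K q w : (SmashD K N q)ˣ) : SmashD K N q) = Se K q w := rfl
@[simp] lemma qU_val : ((qU K N q : (SmashD K N q)ˣ) : SmashD K N q)
    = algebraMap K (SmashD K N q) (q : K) := rfl

lemma qU_central (x : SmashD K N q) : (qU K N q : SmashD K N q) * x = x * qU K N q := by
  simpa using (Algebra.commutes (q : K) x)

lemma qU_commute (u : (SmashD K N q)ˣ) : Commute (qU K N q) u :=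
  Units.ext (by simpa only [Units.val_mul] using qU_central (q := q) (u : SmashD K N q))

lemma su_mul (w w' : Equiv.Perm (Fin N)) :
    su K q w * su K q w' = su K q (w * w') :=
  Units.ext (by simpa using rel_Smul (q := q) w w')

lemma su_one : su K q (1 : Equiv.Perm (Fin N)) = 1 :=
  Units.ext (by simpa using rel_Sone (q := q) (N := N))

lemma su_inv (w : Equiv.Perm (Fin N)) : (su K q w)⁻¹ = su K q w⁻¹ :=
  inv_eq_of_mul_eq_one_right (by rw [su_mul, mul_inv_cancel, su_one])

lemma xu_commute (i j : Fin N) : Commute (xu K q i) (xu K q j) :=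
  Units.ext (by simpa using rel_XX (q := q) i j)

lemma conj_su_xu (w : Equiv.Perm (Fin N)) (i : Fin N) :
    MulAut.conj (su K q w) (xu K q i) = xu K q (w i) := by
  apply Units.ext
  rw [MulAut.conj_apply, su_inv]
  show Se K q w * Xe K q i * Se K q w⁻¹ = Xe K q (w i)
  rw [rel_SX, mul_assoc, rel_Smul, mul_inv_cancel, rel_Sone, mul_one]

lemma conj_su_yu (w : Equiv.Perm (Fin N)) (i : Fin N) :
    MulAut.conj (su K q w) (yu K q i) = yu K q (w i) := by
  apply Units.ext
  rw [MulAut.conj_apply, su_inv]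
  show Se K q w * Ye K q i * Se K q w⁻¹ = Ye K q (w i)
  rw [rel_SY, mul_assoc, rel_Smul, mul_inv_cancel, rel_Sone, mul_one]

lemma yu_xu_eq (i : Fin N) :
    yu K q i * xu K q i = qU K N q * (xu K q i * yu K q i) := by
  apply Units.ext
  show Ye K q i * Xe K q i
      = (qU K N q : SmashD K N q) * (Xe K q i * Ye K q i)
  rw [rel_YXeq]
  simp [Algebra.smul_def]

lemma conj_yu_xu (i j : Fin N) :
    MulAut.conj (yu K q i) (xu K q j)
      = (if i = j then qU K N q else 1) * xu K q j := by
  by_cases h : i = j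
  · subst h
    rw [if_pos rfl, MulAut.conj_apply, yu_xu_eq, mul_assoc, mul_assoc,
      mul_inv_cancel, mul_one]
  · rw [if_neg h, one_mul, MulAut.conj_apply]
    have : yu K q i * xu K q j = xu K q j * yu K q i :=
      Units.ext (by simpa using rel_YXne (q := q) h)
    rw [this, mul_assoc, mul_inv_cancel, mul_one]

lemma conj_yu_xu_zpow (i j : Fin N) (k : ℤ) :
    MulAut.conj (yu K q i) (xu K q j ^ k)
      = (if i = j then qU K N q else 1) ^ k * xu K q j ^ k := by
  rw [map_zpow, conj_yu_xu]
  exact Commute.mul_zpow (by split <;> [exact qU_commute _; exact Commute.one_left _]) k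

lemma yu_xu_zpow (i j : Fin N) (k : ℤ) :
    yu K q i * (xu K q j ^ k) =
      (if i = j then qU K N q else 1) ^ k * xu K q j ^ k * yu K q i := by
  have h := conj_yu_xu_zpow (q := q) i j k
  rw [MulAut.conj_apply] at h
  calc yu K q i * xu K q j ^ k
      = (yu K q i * xu K q j ^ k * (yu K q i)⁻¹) * yu K q i := by
        rw [inv_mul_cancel_right]
    _ = _ := by rw [h]

lemma su_xu_zpow (w : Equiv.Perm (Fin N)) (i : Fin N) (k : ℤ) :
    su K q w * (xu K q i ^ k) = xu K q (w i) ^ k * su K q w := by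
  have h : MulAut.conj (su K q w) (xu K q i ^ k) = xu K q (w i) ^ k := by
    rw [map_zpow, conj_su_xu]
  rw [MulAut.conj_apply] at h
  calc su K q w * xu K q i ^ k
      = (su K q w * xu K q i ^ k * (su K q w)⁻¹) * su K q w := by
        rw [inv_mul_cancel_right]
    _ = _ := by rw [h]

end St14
namespace St14

variable {K : Type} [Field K] {N : ℕ} {q : Kˣ}

/-- The subgroup of `Dˣ` generated by the `X_i`. -/
def XA (K : Type) [Field K] (N : ℕ) (q : Kˣ) : Subgroup (SmashD K N q)ˣ :=
  Subgroup.closure (Set.range (xu K q))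

instance : CommGroup (XA K N q) :=
  { (inferInstance : Group (XA K N q)) with
    mul_comm := by
      rintro ⟨x, hx⟩ ⟨y, hy⟩
      apply Subtype.ext
      show x * y = y * x
      induction hx, hy using Subgroup.closure_induction₂ with
      | mem a b ha hb =>
          obtain ⟨i, rfl⟩ := ha; obtain ⟨j, rfl⟩ := hb
          exact xu_commute i j
      | one_left x hx => simp
      | one_right x hx => simp
      | mul_left a b c _ _ _ h1 h2 => rw [mul_assoc, h2, ← mul_assoc, h1, mul_assoc]
      | mul_right a b c _ _ _ h1 h2 => rw [← mul_assoc, h1, mul_assoc, h2, ← mul_assoc]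
      | inv_left a b _ _ h =>
          rw [eq_comm, mul_inv_eq_iff_eq_mul, mul_assoc, ← h, inv_mul_cancel_left]
      | inv_right a b _ _ h =>
          rw [mul_inv_eq_iff_eq_mul, mul_assoc, h, inv_mul_cancel_left] }

/-- `X_i` as element of the commutative subgroup. -/
def xA (K : Type) [Field K] {N : ℕ} (q : Kˣ) (i : Fin N) : XA K N q :=
  ⟨xu K q i, Subgroup.subset_closure ⟨i, rfl⟩⟩

@[simp] lemma xA_coe (i : Fin N) :
    ((xA K q i : XA K N q) : (SmashD K N q)ˣ) = xu K q i := rfl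

/-- the monomial `X^a`. -/
def Xp (K : Type) [Field K] {N : ℕ} (q : Kˣ) (a : Fin N → ℤ) : XA K N q :=
  ∏ i, xA K q i ^ (a i)

/-- `X^a` as element of `D`. -/
def XpD (K : Type) [Field K] {N : ℕ} (q : Kˣ) (a : Fin N → ℤ) : SmashD K N q :=
  ((Xp K q a : XA K N q) : (SmashD K N q)ˣ)

lemma Xp_add (a a' : Fin N → ℤ) : Xp K q (a + a') = Xp K q a * Xp K q a' := by
  rw [Xp, Xp, Xp, ← Finset.prod_mul_distrib]
  exact Finset.prod_congr rfl fun i _ => by rw [Pi.add_apply, zpow_add]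

lemma Xp_zero : Xp K q (0 : Fin N → ℤ) = 1 := by
  simp [Xp]

lemma Xp_single (i : Fin N) (k : ℤ) : Xp K q (Pi.single i k) = xA K q i ^ k := by
  rw [Xp]
  rw [Finset.prod_eq_single i (fun j _ hj => by rw [Pi.single_eq_of_ne hj, zpow_zero])
    (fun h => absurd (Finset.mem_univ i) h)]
  rw [Pi.single_eq_same]

lemma XpD_add (a a' : Fin N → ℤ) : XpD K q (a + a') = XpD K q a * XpD K q a' := by
  rw [XpD, XpD, XpD, Xp_add]; rfl

lemma XpD_zero : XpD K q (0 : Fin N → ℤ) = 1 := by rw [XpD, Xp_zero]; rfl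

lemma XpD_single_one (i : Fin N) : XpD K q (Pi.single i 1) = Xe K q i := by
  rw [XpD, Xp_single]
  show ((xA K q i ^ (1:ℤ) : XA K N q) : (SmashD K N q)ˣ).val = _
  rw [zpow_one]; rfl

lemma XpD_single_negone (i : Fin N) : XpD K q (Pi.single i (-1)) = XeInv K q i := by
  rw [XpD, Xp_single]
  show ((xA K q i ^ (-1:ℤ) : XA K N q) : (SmashD K N q)ˣ).val = _
  rw [zpow_neg_one]
  rfl

lemma XpD_comm (a a' : Fin N → ℤ) : XpD K q a * XpD K q a' = XpD K q a' * XpD K q a := by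
  rw [← XpD_add, ← XpD_add, add_comm]

lemma Xe_mul_XpD (i : Fin N) (a : Fin N → ℤ) :
    Xe K q i * XpD K q a = XpD K q (a + Pi.single i 1) := by
  rw [← XpD_single_one (q := q) i, XpD_comm, ← XpD_add]

lemma XeInv_mul_XpD (i : Fin N) (a : Fin N → ℤ) :
    XeInv K q i * XpD K q a = XpD K q (a + Pi.single i (-1)) := by
  rw [← XpD_single_negone (q := q) i, XpD_comm, ← XpD_add]

lemma conj_mul_eq (g x : (SmashD K N q)ˣ) :
    MulAut.conj g x * g = g * x := by
  rw [MulAut.conj_apply, inv_mul_cancel_right]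

lemma conj_su_Xp (w : Equiv.Perm (Fin N)) (a : Fin N → ℤ) :
    MulAut.conj (su K q w) ((Xp K q a : XA K N q) : (SmashD K N q)ˣ)
      = ((Xp K q (a ∘ ⇑w⁻¹) : XA K N q) : (SmashD K N q)ˣ) := by
  have key : ∀ s : Finset (Fin N),
      MulAut.conj (su K q w) ((∏ j ∈ s, xA K q j ^ a j : XA K N q) : (SmashD K N q)ˣ)
        = ((∏ j ∈ s, xA K q (w j) ^ a j : XA K N q) : (SmashD K N q)ˣ) := by
    intro s
    induction s using Finset.induction_on with
    | empty => simp
    | @insert j s' hj ih =>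
        rw [Finset.prod_insert hj, Finset.prod_insert hj]
        push_cast
        simp only [map_mul, ih, map_zpow, xA_coe, conj_su_xu]
  have h2 : (Xp K q (a ∘ ⇑w⁻¹) : XA K N q) = ∏ j, xA K q (w j) ^ a j := by
    rw [Xp]
    refine (Equiv.prod_comp w (fun j => xA K q j ^ ((a ∘ ⇑w⁻¹) j))).symm.trans
      (Finset.prod_congr rfl fun i _ => by simp)
  rw [h2]
  exact key Finset.univ

lemma conj_yu_Xp (i : Fin N) (a : Fin N → ℤ) :
    MulAut.conj (yu K q i) ((Xp K q a : XA K N q) : (SmashD K N q)ˣ)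
      = qU K N q ^ (a i) * ((Xp K q a : XA K N q) : (SmashD K N q)ˣ) := by
  have key : ∀ s : Finset (Fin N),
      MulAut.conj (yu K q i) ((∏ j ∈ s, xA K q j ^ a j : XA K N q) : (SmashD K N q)ˣ)
        = qU K N q ^ (∑ j ∈ s, if i = j then a j else 0)
          * ((∏ j ∈ s, xA K q j ^ a j : XA K N q) : (SmashD K N q)ˣ) := by
    intro s
    induction s using Finset.induction_on with
    | empty => simp
    | @insert j s' hj ih =>
        rw [Finset.prod_insert hj, Finset.sum_insert hj]
        push_cast
        simp only [map_mul, ih, map_zpow, xA_coe, conj_yu_xu]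
        rw [Commute.mul_zpow (by split <;> [exact qU_commute _; exact Commute.one_left _])]
        have hite : (if i = j then qU K N q else 1) ^ a j
            = qU K N q ^ (if i = j then a j else 0) := by
          split <;> simp
        rw [hite]
        set A := (xu K q j : (SmashD K N q)ˣ) ^ a j
        set B := ((∏ x ∈ s', xA K q x ^ a x : XA K N q) : (SmashD K N q)ˣ)
        set t := (if i = j then a j else 0)
        set Sg := (∑ j ∈ s', if i = j then a j else 0) with hSg
        calc qU K N q ^ t * A * (qU K N q ^ Sg * B)
            = qU K N q ^ t * (A * (qU K N q ^ Sg * B)) := by rw [mul_assoc]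
          _ = qU K N q ^ t * ((A * qU K N q ^ Sg) * B) := by rw [mul_assoc]
          _ = qU K N q ^ t * ((qU K N q ^ Sg * A) * B) := by
              rw [((qU_commute (q := q) A).zpow_left Sg).eq]
          _ = qU K N q ^ t * (qU K N q ^ Sg * (A * B)) := by rw [mul_assoc]
          _ = (qU K N q ^ t * qU K N q ^ Sg) * (A * B) := by rw [mul_assoc]
          _ = qU K N q ^ (t + Sg) * (A * B) := by rw [zpow_add]
  have := key Finset.univ
  rw [Finset.sum_ite_eq Finset.univ i (fun j => a j), if_pos (Finset.mem_univ i)] at this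
  simpa [Xp] using this

lemma qU_zpow_smul (z : ℤ) (x : SmashD K N q) :
    ((qU K N q ^ z : (SmashD K N q)ˣ) : SmashD K N q) * x = ((q ^ z : Kˣ) : K) • x := by
  have : (qU K N q) ^ z
      = Units.map (algebraMap K (SmashD K N q) : K →* SmashD K N q) (q ^ z) := by
    rw [map_zpow]; rfl
  rw [this]
  show algebraMap K (SmashD K N q) ((q ^ z : Kˣ) : K) * x = _
  rw [← Algebra.smul_def]

/-- `s_w X^a = X^{a ∘ w⁻¹} s_w`. -/
lemma Se_mul_XpD (w : Equiv.Perm (Fin N)) (a : Fin N → ℤ) :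
    Se K q w * XpD K q a = XpD K q (a ∘ ⇑w⁻¹) * Se K q w := by
  have h := congrArg Units.val
    ((conj_mul_eq (su K q w) ((Xp K q a : XA K N q) : (SmashD K N q)ˣ)).symm.trans
      (by rw [conj_su_Xp]))
  simp only [Units.val_mul, su_val] at h
  rw [XpD, XpD]
  exact_mod_cast h

/-- `Y_i X^a = q^{a i} • X^a Y_i`. -/
lemma Ye_mul_XpD (i : Fin N) (a : Fin N → ℤ) :
    Ye K q i * XpD K q a = ((q ^ (a i) : Kˣ) : K) • (XpD K q a * Ye K q i) := by
  have h := congrArg Units.val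
    ((conj_mul_eq (yu K q i) ((Xp K q a : XA K N q) : (SmashD K N q)ˣ)).symm.trans
      (by rw [conj_yu_Xp]))
  simp only [Units.val_mul, yu_val] at h
  rw [mul_assoc, qU_zpow_smul] at h
  rw [XpD]
  exact h

/-- `Y_i⁻¹ X^a = q^{-a i} • X^a Y_i⁻¹`. -/
lemma YeInv_mul_XpD (i : Fin N) (a : Fin N → ℤ) :
    YeInv K q i * XpD K q a = ((q ^ (-a i) : Kˣ) : K) • (XpD K q a * YeInv K q i) := by
  have h1 := Ye_mul_XpD (q := q) i a
  have h2 : XpD K q a * Ye K q i = ((q ^ (-a i) : Kˣ) : K) • (Ye K q i * XpD K q a) := by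
    rw [h1, smul_smul, ← Units.val_mul, ← zpow_add, neg_add_cancel, zpow_zero,
      Units.val_one, one_smul]
  calc YeInv K q i * XpD K q a
      = YeInv K q i * (XpD K q a * Ye K q i) * YeInv K q i := by
        rw [mul_assoc, mul_assoc, rel_YYinv, mul_one]
    _ = ((q ^ (-a i) : Kˣ) : K) • (YeInv K q i * (Ye K q i * XpD K q a)) * YeInv K q i := by
        rw [h2, mul_smul_comm]
    _ = ((q ^ (-a i) : Kˣ) : K) • (XpD K q a * YeInv K q i) := by
        rw [← mul_assoc, rel_YinvY, one_mul, smul_mul_assoc]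

/-- `Y_i s_w = s_w Y_{w⁻¹ i}`. -/
lemma Ye_mul_Se (i : Fin N) (w : Equiv.Perm (Fin N)) :
    Ye K q i * Se K q w = Se K q w * Ye K q (w⁻¹ i) := by
  rw [rel_SY w (w⁻¹ i), Equiv.Perm.apply_inv_self]

/-- `Y_i⁻¹ s_w = s_w Y_{w⁻¹ i}⁻¹`. -/
lemma YeInv_mul_Se (i : Fin N) (w : Equiv.Perm (Fin N)) :
    YeInv K q i * Se K q w = Se K q w * YeInv K q (w⁻¹ i) := by
  have h := Ye_mul_Se (q := q) i w
  calc YeInv K q i * Se K q w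
      = YeInv K q i * (Se K q w * Ye K q (w⁻¹ i)) * YeInv K q (w⁻¹ i) := by
        rw [mul_assoc _ _ (YeInv K q (w⁻¹ i)), mul_assoc, rel_YYinv, mul_one]
    _ = YeInv K q i * (Ye K q i * Se K q w) * YeInv K q (w⁻¹ i) := by rw [← h]
    _ = Se K q w * YeInv K q (w⁻¹ i) := by rw [← mul_assoc, rel_YinvY, one_mul]

end St14
set_option linter.unusedSectionVars false

namespace St14

section ModuleM

variable {K : Type} [Field K] {N : ℕ} {q : Kˣ} {b : Fin N → Kˣ}
variable {S : Type} [AddCommGroup S] [Module K S]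
  [DistribMulAction ↥(permStab K N b) S] [SMulCommClass ↥(permStab K N b) K S]

/-- The coset space `S_N / W_J`. -/
abbrev Qc (K : Type) [Field K] (N : ℕ) (b : Fin N → Kˣ) :=
  Equiv.Perm (Fin N) ⧸ permStab K N b

/-- The index type of the basis of the induced module. -/
abbrev Idx (K : Type) [Field K] (N : ℕ) (b : Fin N → Kˣ) :=
  (Fin N → ℤ) × Qc K N b

/-- The concrete model of the induced module. -/
abbrev Mo (K : Type) [Field K] (N : ℕ) (b : Fin N → Kˣ) (S : Type)
    [AddCommGroup S] [Module K S] := Idx K N b →₀ S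

/-- A fixed representative of a coset. -/
def rep (c : Qc K N b) : Equiv.Perm (Fin N) := Quotient.out c

lemma rep_spec (c : Qc K N b) : ((rep c : Equiv.Perm (Fin N)) : Qc K N b) = c :=
  QuotientGroup.out_eq' c

lemma coe_smul (w u : Equiv.Perm (Fin N)) :
    w • ((u : Qc K N b)) = ((w * u : Equiv.Perm (Fin N)) : Qc K N b) := rfl

lemma stab_apply (v : ↥(permStab K N b)) (i : Fin N) :
    b ((v : Equiv.Perm (Fin N)) i) = b i := v.2 i

/-- The `b`-weight attached to a coset. -/
def βc (c : Qc K N b) (i : Fin N) : Kˣ := b ((rep c)⁻¹ i)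

lemma βc_eq (u : Equiv.Perm (Fin N)) (c : Qc K N b) (h : (u : Qc K N b) = c)
    (i : Fin N) : βc c i = b (u⁻¹ i) := by
  have hv : u⁻¹ * rep c ∈ permStab K N b := by
    rw [← QuotientGroup.eq, h, rep_spec]
  have hmem : (rep c)⁻¹ * u ∈ permStab K N b := by
    simpa [mul_inv_rev] using (permStab K N b).inv_mem hv
  have := (⟨_, hmem⟩ : ↥(permStab K N b)).2 (u⁻¹ i)
  simp only [Equiv.Perm.mul_apply] at this
  rw [βc, ← this]
  congr 1
  simp [Equiv.Perm.mul_apply]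

/-- The twist in `W_J` relating the chosen representatives of `c` and `w • c`. -/
def twst (w : Equiv.Perm (Fin N)) (c : Qc K N b) : ↥(permStab K N b) :=
  ⟨(rep (w • c))⁻¹ * (w * rep c), by
    rw [← QuotientGroup.eq, rep_spec, ← coe_smul, rep_spec]⟩

lemma βc_smul_apply (w : Equiv.Perm (Fin N)) (c : Qc K N b) (i : Fin N) :
    βc (w • c) (w i) = βc c i := by
  have h1 : ((w * rep c : Equiv.Perm (Fin N)) : Qc K N b) = w • c := by
    rw [← coe_smul, rep_spec]
  rw [βc_eq (w * rep c) (w • c) h1 (w i)]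
  rw [βc]
  congr 1
  simp [Equiv.Perm.mul_apply]

instance : SMulCommClass K (↥(permStab K N b)) S := SMulCommClass.symm _ _ _

/-- generic "monomial" linear endomorphism of `Mo`. -/
def fop (σ : Idx K N b → Idx K N b) (τ : Idx K N b → S →ₗ[K] S) :
    Mo K N b S →ₗ[K] Mo K N b S :=
  Finsupp.lsum K fun p => (Finsupp.lsingle (σ p)).comp (τ p)

@[simp] lemma fop_single (σ : Idx K N b → Idx K N b) (τ : Idx K N b → S →ₗ[K] S)
    (p : Idx K N b) (s : S) :
    fop σ τ (Finsupp.single p s) = Finsupp.single (σ p) (τ p s) := by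
  rw [fop, Finsupp.lsum_single]; rfl

/-- The weight of a basis index. -/
def wt (q : Kˣ) (p : Idx K N b) (i : Fin N) : Kˣ := q ^ (p.1 i) * βc p.2 i

/-- The action of the generators on `Mo`. -/
def genAct (K : Type) [Field K] {N : ℕ} (q : Kˣ) (b : Fin N → Kˣ) (S : Type)
    [AddCommGroup S] [Module K S] [DistribMulAction ↥(permStab K N b) S]
    [SMulCommClass ↥(permStab K N b) K S] :
    SGen N → Module.End K (Mo K N b S)
  | .X i => fop (fun p => (p.1 + Pi.single i 1, p.2)) (fun _ => LinearMap.id)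
  | .Xinv i => fop (fun p => (p.1 + Pi.single i (-1), p.2)) (fun _ => LinearMap.id)
  | .Y i => fop id (fun p => ((wt q p i : K)) • LinearMap.id)
  | .Yinv i => fop id (fun p => ((((wt q p i)⁻¹ : Kˣ)) : K) • LinearMap.id)
  | .S w => fop (fun p => (p.1 ∘ ⇑w⁻¹, w • p.2))
      (fun p => DistribMulAction.toLinearMap K S (twst w p.2))

@[simp] lemma genAct_X (i : Fin N) (p : Idx K N b) (s : S) :
    genAct K q b S (.X i) (Finsupp.single p s)
      = Finsupp.single (p.1 + Pi.single i 1, p.2) s := by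
  show fop _ _ _ = _
  rw [fop_single]; rfl

@[simp] lemma genAct_Xinv (i : Fin N) (p : Idx K N b) (s : S) :
    genAct K q b S (.Xinv i) (Finsupp.single p s)
      = Finsupp.single (p.1 + Pi.single i (-1), p.2) s := by
  show fop _ _ _ = _
  rw [fop_single]; rfl

@[simp] lemma genAct_Y (i : Fin N) (p : Idx K N b) (s : S) :
    genAct K q b S (.Y i) (Finsupp.single p s)
      = Finsupp.single p ((wt q p i : K) • s) := by
  show fop _ _ _ = _
  rw [fop_single]; rfl

@[simp] lemma genAct_Yinv (i : Fin N) (p : Idx K N b) (s : S) :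
    genAct K q b S (.Yinv i) (Finsupp.single p s)
      = Finsupp.single p ((((wt q p i)⁻¹ : Kˣ) : K) • s) := by
  show fop _ _ _ = _
  rw [fop_single]; rfl

@[simp] lemma genAct_S (w : Equiv.Perm (Fin N)) (p : Idx K N b) (s : S) :
    genAct K q b S (.S w) (Finsupp.single p s)
      = Finsupp.single (p.1 ∘ ⇑w⁻¹, w • p.2) (twst w p.2 • s) := by
  show fop _ _ _ = _
  rw [fop_single]; rfl

/-- The action of the free algebra on `Mo`. -/
def φA (K : Type) [Field K] {N : ℕ} (q : Kˣ) (b : Fin N → Kˣ) (S : Type)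
    [AddCommGroup S] [Module K S] [DistribMulAction ↥(permStab K N b) S]
    [SMulCommClass ↥(permStab K N b) K S] :
    FreeAlgebra K (SGen N) →ₐ[K] Module.End K (Mo K N b S) :=
  FreeAlgebra.lift K (genAct K q b S)

@[simp] lemma φA_sg (g : SGen N) : φA K q b S (sg K g) = genAct K q b S g :=
  FreeAlgebra.lift_ι_apply _ _

lemma wt_shift (i j : Fin N) (a : Fin N → ℤ) (c : Qc K N b) (k : ℤ) :
    wt q ((a + Pi.single j k, c) : Idx K N b) i
      = q ^ (if i = j then k else 0) * wt q ((a, c) : Idx K N b) i := by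
  simp only [wt, Pi.add_apply]
  by_cases h : i = j
  · subst h
    simp [Pi.single_eq_same, zpow_add, mul_assoc, mul_left_comm]
  · simp [Pi.single_eq_of_ne h, h]

lemma φA_rel {x y : FreeAlgebra K (SGen N)} (h : SRel K N q x y) :
    φA K q b S x = φA K q b S y := by
  induction h with
  | XX i j =>
      rw [map_mul, map_mul, φA_sg, φA_sg]
      refine Finsupp.lhom_ext fun p s => ?_
      simp only [Module.End.mul_apply, genAct_X]
      rw [add_assoc, add_assoc, add_comm (Pi.single j 1) (Pi.single i 1)]
  | XXinv i =>
      rw [map_mul, map_one, φA_sg, φA_sg]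
      refine Finsupp.lhom_ext fun p s => ?_
      simp only [Module.End.mul_apply, genAct_X, genAct_Xinv, Module.End.one_apply]
      rw [add_assoc, ← Pi.single_add]
      norm_num
  | XinvX i =>
      rw [map_mul, map_one, φA_sg, φA_sg]
      refine Finsupp.lhom_ext fun p s => ?_
      simp only [Module.End.mul_apply, genAct_X, genAct_Xinv, Module.End.one_apply]
      rw [add_assoc, ← Pi.single_add]
      norm_num
  | YY i j =>
      rw [map_mul, map_mul, φA_sg, φA_sg]
      refine Finsupp.lhom_ext fun p s => ?_
      simp only [Module.End.mul_apply, genAct_Y, smul_smul]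
      rw [mul_comm]
  | YYinv i =>
      rw [map_mul, map_one, φA_sg, φA_sg]
      refine Finsupp.lhom_ext fun p s => ?_
      simp only [Module.End.mul_apply, genAct_Y, genAct_Yinv, Module.End.one_apply,
        smul_smul, ← Units.val_mul, mul_inv_cancel, Units.val_one, one_smul]
  | YinvY i =>
      rw [map_mul, map_one, φA_sg, φA_sg]
      refine Finsupp.lhom_ext fun p s => ?_
      simp only [Module.End.mul_apply, genAct_Y, genAct_Yinv, Module.End.one_apply,
        smul_smul, ← Units.val_mul, inv_mul_cancel, Units.val_one, one_smul]
  | YXne i j hij =>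
      rw [map_mul, map_mul, φA_sg, φA_sg]
      refine Finsupp.lhom_ext fun p s => ?_
      simp only [Module.End.mul_apply, genAct_X, genAct_Y]
      rw [wt_shift, if_neg hij, zpow_zero, one_mul]
  | YXeq i =>
      rw [map_mul, map_smul, map_mul, φA_sg, φA_sg]
      refine Finsupp.lhom_ext fun p s => ?_
      simp only [Module.End.mul_apply, LinearMap.smul_apply, genAct_X, genAct_Y,
        Finsupp.smul_single]
      rw [wt_shift, if_pos rfl, zpow_one, Units.val_mul, mul_smul]
  | Smul w w' =>
      rw [map_mul, φA_sg, φA_sg, φA_sg]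
      refine Finsupp.lhom_ext fun p s => ?_
      simp only [Module.End.mul_apply, genAct_S]
      have hidx : (p.1 ∘ ⇑w'⁻¹) ∘ ⇑w⁻¹ = p.1 ∘ ⇑(w * w')⁻¹ := by
        funext j
        simp [mul_inv_rev, Equiv.Perm.mul_apply]
      rw [hidx, smul_smul w w' p.2, smul_smul (twst w (w' • p.2)) (twst w' p.2) s]
      congr 1
      have ht : twst w (w' • p.2) * twst w' p.2 = twst (w * w') p.2 := by
        apply Subtype.ext
        push_cast
        show (rep (w • w' • p.2))⁻¹ * (w * rep (w' • p.2))
            * ((rep (w' • p.2))⁻¹ * (w' * rep p.2))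
          = (rep ((w * w') • p.2))⁻¹ * ((w * w') * rep p.2)
        rw [smul_smul w w' p.2]
        group
      rw [ht]
  | Sone =>
      rw [map_one, φA_sg]
      refine Finsupp.lhom_ext fun p s => ?_
      simp only [Module.End.one_apply, genAct_S]
      have h1 : twst (1 : Equiv.Perm (Fin N)) p.2 = 1 := by
        apply Subtype.ext
        show (rep ((1 : Equiv.Perm (Fin N)) • p.2))⁻¹ * (1 * rep p.2) = 1
        rw [one_smul, one_mul, inv_mul_cancel]
      rw [h1, one_smul, one_smul]
      have : p.1 ∘ ⇑(1 : Equiv.Perm (Fin N))⁻¹ = p.1 := by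
        funext j; simp
      rw [this]
  | SX w i =>
      rw [map_mul, map_mul, φA_sg, φA_sg, φA_sg]
      refine Finsupp.lhom_ext fun p s => ?_
      simp only [Module.End.mul_apply, genAct_S, genAct_X]
      have hidx : (p.1 + Pi.single i 1) ∘ ⇑w⁻¹
          = (p.1 ∘ ⇑w⁻¹) + Pi.single (w i) 1 := by
        funext j
        simp only [Function.comp_apply, Pi.add_apply]
        congr 1
        by_cases hj : j = w i
        · subst hj
          rw [Equiv.Perm.inv_apply_self, Pi.single_eq_same, Pi.single_eq_same]
        · rw [Pi.single_eq_of_ne hj, Pi.single_eq_of_ne]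
          intro hcon
          exact hj (by rw [← hcon, Equiv.Perm.apply_inv_self])
      rw [hidx]
  | SY w i =>
      rw [map_mul, map_mul, φA_sg, φA_sg, φA_sg]
      refine Finsupp.lhom_ext fun p s => ?_
      simp only [Module.End.mul_apply, genAct_S, genAct_Y, Finsupp.smul_single]
      have hwt : wt q ((p.1 ∘ ⇑w⁻¹, w • p.2) : Idx K N b) (w i) = wt q p i := by
        rw [wt, wt]
        show q ^ (p.1 (w⁻¹ (w i))) * βc (w • p.2) (w i) = _
        rw [Equiv.Perm.inv_apply_self, βc_smul_apply]
      rw [hwt, smul_comm]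

end ModuleM

end St14
namespace St14

section Phi

variable {K : Type} [Field K] {N : ℕ} {q : Kˣ} {b : Fin N → Kˣ}
variable {S : Type} [AddCommGroup S] [Module K S]
  [DistribMulAction ↥(permStab K N b) S] [SMulCommClass ↥(permStab K N b) K S]

/-- The action of `D` on the model module. -/
def φD (K : Type) [Field K] {N : ℕ} (q : Kˣ) (b : Fin N → Kˣ) (S : Type)
    [AddCommGroup S] [Module K S] [DistribMulAction ↥(permStab K N b) S]
    [SMulCommClass ↥(permStab K N b) K S] :
    SmashD K N q →ₐ[K] Module.End K (Mo K N b S) :=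
  RingQuot.liftAlgHom K ⟨φA K q b S, fun _ _ h => φA_rel h⟩

lemma φD_mk (x : FreeAlgebra K (SGen N)) :
    φD K q b S (RingQuot.mkAlgHom K (SRel K N q) x) = φA K q b S x :=
  RingQuot.liftAlgHom_mkAlgHom_apply _ _ _ _

noncomputable instance moduleMo : Module (SmashD K N q) (Mo K N b S) :=
  Module.compHom _ (φD K q b S).toRingHom

lemma smul_mo_def (d : SmashD K N q) (m : Mo K N b S) :
    d • m = φD K q b S d m := rfl

instance : IsScalarTower K (SmashD K N q) (Mo K N b S) :=
  ⟨fun k d m => by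
    rw [smul_mo_def, smul_mo_def, map_smul]
    rfl⟩

instance : SMulCommClass K (SmashD K N q) (Mo K N b S) :=
  ⟨fun k d m => by
    rw [smul_mo_def, smul_mo_def, map_smul]⟩

lemma algebraMap_smul_mo (k : K) (m : Mo K N b S) :
    (algebraMap K (SmashD K N q) k) • m = k • m := by
  rw [smul_mo_def, AlgHom.commutes]
  exact Module.algebraMap_end_apply K K _ k m

lemma Xe_smul (i : Fin N) (a : Fin N → ℤ) (c : Qc K N b) (s : S) :
    Xe K q i • Finsupp.single ((a, c) : Idx K N b) s
      = (Finsupp.single (a + Pi.single i 1, c) s : Mo K N b S) := by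
  rw [smul_mo_def, Xe, φD_mk, φA_sg, genAct_X]

lemma XeInv_smul (i : Fin N) (a : Fin N → ℤ) (c : Qc K N b) (s : S) :
    XeInv K q i • Finsupp.single ((a, c) : Idx K N b) s
      = (Finsupp.single (a + Pi.single i (-1), c) s : Mo K N b S) := by
  rw [smul_mo_def, XeInv, φD_mk, φA_sg, genAct_Xinv]

lemma Ye_smul (i : Fin N) (a : Fin N → ℤ) (c : Qc K N b) (s : S) :
    Ye K q i • Finsupp.single ((a, c) : Idx K N b) s
      = (Finsupp.single ((a, c) : Idx K N b) ((wt q ((a, c) : Idx K N b) i : K) • s) : Mo K N b S) := by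
  rw [smul_mo_def, Ye, φD_mk, φA_sg, genAct_Y]

lemma Se_smul (w : Equiv.Perm (Fin N)) (a : Fin N → ℤ) (c : Qc K N b) (s : S) :
    Se K q w • Finsupp.single ((a, c) : Idx K N b) s
      = (Finsupp.single (a ∘ ⇑w⁻¹, w • c) (twst w c • s) : Mo K N b S) := by
  rw [smul_mo_def, Se, φD_mk, φA_sg, genAct_S]

lemma xu_zpow_smul (i : Fin N) (k : ℤ) (a : Fin N → ℤ) (c : Qc K N b) (s : S) :
    ((xu K q i ^ k : (SmashD K N q)ˣ) : SmashD K N q) • Finsupp.single ((a, c) : Idx K N b) s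
      = (Finsupp.single (a + Pi.single i k, c) s : Mo K N b S) := by
  induction k using Int.induction_on generalizing a with
  | zero => simp
  | succ n ih =>
      have : (xu K q i ^ ((n : ℤ) + 1) : (SmashD K N q)ˣ) = xu K q i ^ (n : ℤ) * xu K q i := by
        rw [zpow_add_one]
      rw [this, Units.val_mul, mul_smul]
      have hXe : ((xu K q i : (SmashD K N q)ˣ) : SmashD K N q) = Xe K q i := rfl
      rw [hXe, Xe_smul, ih]
      congr 1
      rw [add_assoc, ← Pi.single_add, add_comm (1 : ℤ)]
  | pred n ih =>
      have : (xu K q i ^ (-(n : ℤ) - 1) : (SmashD K N q)ˣ)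
          = xu K q i ^ (-(n : ℤ)) * (xu K q i)⁻¹ := by
        rw [zpow_sub_one]
      rw [this, Units.val_mul, mul_smul]
      have hXe : (((xu K q i)⁻¹ : (SmashD K N q)ˣ) : SmashD K N q) = XeInv K q i := rfl
      rw [hXe, XeInv_smul, ih]
      congr 1
      rw [add_assoc, ← Pi.single_add]
      rw [show (-1 : ℤ) + -(n : ℤ) = -(n : ℤ) - 1 from by ring]

lemma XpD_smul (a' a : Fin N → ℤ) (c : Qc K N b) (s : S) :
    XpD K q a' • Finsupp.single ((a, c) : Idx K N b) s
      = (Finsupp.single (a + a', c) s : Mo K N b S) := by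
  have key : ∀ t : Finset (Fin N),
      (((∏ j ∈ t, xA K q j ^ a' j : XA K N q) : (SmashD K N q)ˣ) : SmashD K N q)
          • Finsupp.single ((a, c) : Idx K N b) s
        = (Finsupp.single (a + ∑ j ∈ t, Pi.single j (a' j), c) s : Mo K N b S) := by
    intro t
    induction t using Finset.induction_on with
    | empty => simp
    | @insert j t' hj ih =>
        rw [Finset.prod_insert hj, Finset.sum_insert hj]
        have hsplit : (((xA K q j ^ a' j * ∏ x ∈ t', xA K q x ^ a' x : XA K N q) :
            (SmashD K N q)ˣ) : SmashD K N q)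
          = ((xu K q j ^ a' j : (SmashD K N q)ˣ) : SmashD K N q)
            * (((∏ x ∈ t', xA K q x ^ a' x : XA K N q) : (SmashD K N q)ˣ) : SmashD K N q) := rfl
        rw [hsplit, mul_smul, ih, xu_zpow_smul]
        congr 2
        abel
  have := key Finset.univ
  rwa [Finset.univ_sum_single] at this

lemma Ye_smul_apply (i : Fin N) (m : Mo K N b S) (p : Idx K N b) :
    (Ye K q i • m) p = (wt q p i : K) • m p := by
  induction m using Finsupp.induction_linear with
  | zero => simp
  | add f g hf hg => rw [smul_add, Finsupp.add_apply, hf, hg, Finsupp.add_apply, smul_add]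
  | single p' s =>
      obtain ⟨a, c⟩ := p'
      rw [Ye_smul]
      rcases eq_or_ne ((a, c) : Idx K N b) p with h | h
      · subst h; rw [Finsupp.single_eq_same, Finsupp.single_eq_same]
      · rw [Finsupp.single_eq_of_ne' h, Finsupp.single_eq_of_ne' h, smul_zero]

end Phi

end St14
namespace St14

section Psi

open scoped TensorProduct

variable {K : Type} [Field K] {N : ℕ} {q : Kˣ} {b : Fin N → Kˣ}
variable {S : Type} [AddCommGroup S] [Module K S]
  [DistribMulAction ↥(permStab K N b) S] [SMulCommClass ↥(permStab K N b) K S]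

/-- The trivial coset. -/
def c1 (K : Type) [Field K] (N : ℕ) (b : Fin N → Kˣ) : Qc K N b :=
  ((1 : Equiv.Perm (Fin N)) : Qc K N b)

lemma coe_eq_c1_iff (x : Equiv.Perm (Fin N)) :
    (x : Qc K N b) = c1 K N b ↔ x ∈ permStab K N b := by
  rw [c1, eq_comm, QuotientGroup.eq, inv_one, one_mul]

/-- The chosen representative of the trivial coset, as an element of `W_J`. -/
def vJ (K : Type) [Field K] (N : ℕ) (b : Fin N → Kˣ) : ↥(permStab K N b) :=
  ⟨rep (c1 K N b), (coe_eq_c1_iff _).mp (rep_spec (c1 K N b))⟩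

lemma vJ_coe : ((vJ K N b : ↥(permStab K N b)) : Equiv.Perm (Fin N)) = rep (c1 K N b) := rfl

/-- the cyclic vector map. -/
def ηS (K : Type) [Field K] (N : ℕ) (b : Fin N → Kˣ) (S : Type)
    [AddCommGroup S] [Module K S] [DistribMulAction ↥(permStab K N b) S]
    [SMulCommClass ↥(permStab K N b) K S] : S →ₗ[K] Mo K N b S :=
  (Finsupp.lsingle ((0, c1 K N b) : Idx K N b)).comp
    (DistribMulAction.toLinearMap K S (vJ K N b)⁻¹)

lemma ηS_apply (s : S) :
    ηS K N b S s = Finsupp.single ((0, c1 K N b) : Idx K N b) ((vJ K N b)⁻¹ • s) := rfl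

/-- the bilinear map underlying `ψ`. -/
def ψB (K : Type) [Field K] (N : ℕ) (q : Kˣ) (b : Fin N → Kˣ) (S : Type)
    [AddCommGroup S] [Module K S] [DistribMulAction ↥(permStab K N b) S]
    [SMulCommClass ↥(permStab K N b) K S] :
    SmashD K N q →ₗ[K] S →ₗ[K] Mo K N b S :=
  (LinearMap.lcomp K (Mo K N b S) (ηS K N b S)).comp (φD K q b S).toLinearMap

/-- `ψ : D ⊗ S → Mo` as `D`-linear map. -/
def ψ (K : Type) [Field K] (N : ℕ) (q : Kˣ) (b : Fin N → Kˣ) (S : Type)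
    [AddCommGroup S] [Module K S] [DistribMulAction ↥(permStab K N b) S]
    [SMulCommClass ↥(permStab K N b) K S] :
    (SmashD K N q ⊗[K] S) →ₗ[SmashD K N q] Mo K N b S where
  toFun := TensorProduct.lift (ψB K N q b S)
  map_add' := map_add _
  map_smul' := by
    intro d x
    show TensorProduct.lift _ (d • x) = d • TensorProduct.lift _ x
    induction x using TensorProduct.induction_on with
    | zero => rw [smul_zero, map_zero, smul_zero]
    | add x y hx hy => rw [smul_add, map_add, hx, hy, map_add, smul_add]
    | tmul d' s =>
        rw [TensorProduct.smul_tmul', smul_eq_mul]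
        rw [TensorProduct.lift.tmul, TensorProduct.lift.tmul]
        show ψB K N q b S (d * d') s = d • ψB K N q b S d' s
        show φD K q b S (d * d') (ηS K N b S s) = _
        rw [map_mul, smul_mo_def]
        rfl

lemma ψ_tmul (d : SmashD K N q) (s : S) :
    ψ K N q b S (d ⊗ₜ[K] s) = φD K q b S d (ηS K N b S s) := rfl

lemma ψ_one_tmul (s : S) :
    ψ K N q b S ((1 : SmashD K N q) ⊗ₜ[K] s)
      = Finsupp.single ((0, c1 K N b) : Idx K N b) ((vJ K N b)⁻¹ • s) := by
  rw [ψ_tmul, map_one]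
  rfl

lemma wt_zero_one (i : Fin N) : wt q ((0, c1 K N b) : Idx K N b) i = b i := by
  rw [wt]
  show q ^ ((0 : Fin N → ℤ) i) * βc (c1 K N b) i = b i
  rw [βc]
  have : b ((rep (c1 K N b))⁻¹ i) = b i := stab_apply (vJ K N b)⁻¹ i
  rw [this]
  show q ^ (0 : ℤ) * b i = b i
  rw [zpow_zero, one_mul]

lemma Ye_ηS (i : Fin N) (s : S) :
    Ye K q i • ηS K N b S s = ηS K N b S (((b i : Kˣ) : K) • s) := by
  rw [ηS_apply, ηS_apply, Ye_smul, wt_zero_one, smul_comm (((b i) : Kˣ) : K) ((vJ K N b)⁻¹) s]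

lemma YeInv_ηS (i : Fin N) (s : S) :
    YeInv K q i • ηS K N b S s = ηS K N b S ((((b i)⁻¹ : Kˣ) : K) • s) := by
  have h := Ye_ηS (q := q) (b := b) (S := S) i ((((b i)⁻¹ : Kˣ) : K) • s)
  have h2 : (((b i : Kˣ) : K)) • ((((b i)⁻¹ : Kˣ) : K) • s) = s := by
    rw [smul_smul, ← Units.val_mul, mul_inv_cancel, Units.val_one, one_smul]
  rw [h2] at h
  calc YeInv K q i • ηS K N b S s
      = YeInv K q i • (Ye K q i • ηS K N b S (((((b i)⁻¹ : Kˣ)) : K) • s)) := by rw [h]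
    _ = (YeInv K q i * Ye K q i) • ηS K N b S (((((b i)⁻¹ : Kˣ)) : K) • s) := by
        rw [mul_smul]
    _ = _ := by rw [rel_YinvY, one_smul]

lemma smul_coset_one (w : ↥(permStab K N b)) :
    (w : Equiv.Perm (Fin N)) • c1 K N b = c1 K N b := by
  rw [show c1 K N b = ((1 : Equiv.Perm (Fin N)) : Qc K N b) from rfl, coe_smul, mul_one]
  exact (coe_eq_c1_iff _).mpr w.2

lemma Se_ηS (w : ↥(permStab K N b)) (s : S) :
    Se K q (w : Equiv.Perm (Fin N)) • ηS K N b S s = ηS K N b S (w • s) := by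
  rw [ηS_apply, ηS_apply, Se_smul]
  have hz : (0 : Fin N → ℤ) ∘ ⇑((w : Equiv.Perm (Fin N)))⁻¹ = 0 := rfl
  have hc := smul_coset_one (b := b) w
  have ht : twst (w : Equiv.Perm (Fin N)) (c1 K N b) * (vJ K N b)⁻¹
      = (vJ K N b)⁻¹ * w := by
    apply Subtype.ext
    push_cast
    show (rep ((w : Equiv.Perm (Fin N)) • c1 K N b))⁻¹
        * ((w : Equiv.Perm (Fin N)) * rep (c1 K N b)) * (rep (c1 K N b))⁻¹
      = (rep (c1 K N b))⁻¹ * (w : Equiv.Perm (Fin N))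
    rw [hc]
    group
  rw [hz, hc, smul_smul, ht, ← smul_smul]

/-- shorthand for the relation submodule. -/
abbrev RR (K : Type) [Field K] (N : ℕ) (q : Kˣ) (b : Fin N → Kˣ) (S : Type)
    [AddCommGroup S] [Module K S] [DistribMulAction ↥(permStab K N b) S]
    [SMulCommClass ↥(permStab K N b) K S] := indRelb K N q b S

lemma mem_RR_Y (d : SmashD K N q) (i : Fin N) (s : S) :
    (d * Ye K q i) ⊗ₜ[K] s - d ⊗ₜ[K] (((b i : Kˣ) : K) • s) ∈ RR K N q b S :=
  Submodule.subset_span (Or.inl (Or.inl ⟨d, i, s, rfl⟩))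

lemma mem_RR_Yinv (d : SmashD K N q) (i : Fin N) (s : S) :
    (d * YeInv K q i) ⊗ₜ[K] s - d ⊗ₜ[K] ((((b i)⁻¹ : Kˣ) : K) • s) ∈ RR K N q b S :=
  Submodule.subset_span (Or.inl (Or.inr ⟨d, i, s, rfl⟩))

lemma mem_RR_S (d : SmashD K N q) (w : ↥(permStab K N b)) (s : S) :
    (d * Se K q (w : Equiv.Perm (Fin N))) ⊗ₜ[K] s - d ⊗ₜ[K] (w • s) ∈ RR K N q b S :=
  Submodule.subset_span (Or.inr ⟨d, w, s, rfl⟩)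

lemma RR_smul_K (k : K) {x : SmashD K N q ⊗[K] S} (hx : x ∈ RR K N q b S) :
    k • x ∈ RR K N q b S := by
  have : k • x = (algebraMap K (SmashD K N q) k) • x := (algebraMap_smul _ k x).symm
  rw [this]
  exact Submodule.smul_mem _ _ hx

lemma hker : RR K N q b S ≤ LinearMap.ker (ψ K N q b S) := by
  refine Submodule.span_le.mpr ?_
  rintro x ((⟨d, i, s, rfl⟩ | ⟨d, i, s, rfl⟩) | ⟨d, w, s, rfl⟩) <;>
    simp only [SetLike.mem_coe, LinearMap.mem_ker, map_sub, ψ_tmul, map_mul,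
      Module.End.mul_apply, sub_eq_zero]
  · congr 1
    rw [← smul_mo_def, Ye_ηS]
  · congr 1
    rw [← smul_mo_def, YeInv_ηS]
  · congr 1
    rw [← smul_mo_def, Se_ηS]

/-- The linear section sending a basis vector to its monomial representative. -/
def σMo (K : Type) [Field K] (N : ℕ) (q : Kˣ) (b : Fin N → Kˣ) (S : Type)
    [AddCommGroup S] [Module K S] [DistribMulAction ↥(permStab K N b) S]
    [SMulCommClass ↥(permStab K N b) K S] :
    Mo K N b S →ₗ[K] (SmashD K N q ⊗[K] S) :=
  Finsupp.lsum K fun p => TensorProduct.mk K (SmashD K N q) S (XpD K q p.1 * Se K q (rep p.2))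

lemma σMo_single (p : Idx K N b) (s : S) :
    σMo K N q b S (Finsupp.single p s) = (XpD K q p.1 * Se K q (rep p.2)) ⊗ₜ[K] s := by
  rw [σMo, Finsupp.lsum_single]
  rfl

lemma smul_tmul_mul (d d' : SmashD K N q) (s : S) :
    d • (d' ⊗ₜ[K] s) = (d * d') ⊗ₜ[K] s := by
  rw [TensorProduct.smul_tmul', smul_eq_mul]

/-- key per-generator computation. -/
lemma key_gen (g : SGen N) (m : Mo K N b S) :
    (RingQuot.mkAlgHom K (SRel K N q) (sg K g)) • σMo K N q b S m
      - σMo K N q b S (genAct K q b S g m) ∈ RR K N q b S := by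
  induction m using Finsupp.induction_linear with
  | zero => rw [map_zero, map_zero, map_zero, smul_zero, sub_zero]; exact Submodule.zero_mem _
  | add f h hf hh =>
      have := Submodule.add_mem _ hf hh
      convert this using 1
      rw [map_add, map_add, map_add, smul_add]
      abel
  | single p s =>
      obtain ⟨a, c⟩ := p
      cases g with
      | X i =>
          rw [σMo_single]
          show Xe K q i • _ - σMo K N q b S (genAct K q b S (.X i) _) ∈ _
          rw [genAct_X, σMo_single, smul_tmul_mul, ← mul_assoc, Xe_mul_XpD]
          rw [sub_self]
          exact Submodule.zero_mem _
      | Xinv i =>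
          rw [σMo_single]
          show XeInv K q i • _ - σMo K N q b S (genAct K q b S (.Xinv i) _) ∈ _
          rw [genAct_Xinv, σMo_single, smul_tmul_mul, ← mul_assoc, XeInv_mul_XpD]
          rw [sub_self]
          exact Submodule.zero_mem _
      | Y i =>
          rw [σMo_single]
          show Ye K q i • _ - σMo K N q b S (genAct K q b S (.Y i) _) ∈ _
          rw [genAct_Y, σMo_single, smul_tmul_mul, ← mul_assoc, Ye_mul_XpD,
            smul_mul_assoc, mul_assoc, Ye_mul_Se, ← mul_assoc]
          rw [← TensorProduct.smul_tmul']
          have hwt : ((wt q ((a, c) : Idx K N b) i : Kˣ) : K)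
              = ((q ^ (a i) : Kˣ) : K) * ((b ((rep c)⁻¹ i) : Kˣ) : K) := by
            rw [wt, Units.val_mul]; rfl
          rw [hwt]
          have h2 : (XpD K q a * Se K q (rep c)) ⊗ₜ[K]
                ((((q ^ a i : Kˣ) : K) * ((b ((rep c)⁻¹ i) : Kˣ) : K)) • s)
              = ((q ^ a i : Kˣ) : K) • ((XpD K q a * Se K q (rep c)) ⊗ₜ[K]
                (((b ((rep c)⁻¹ i) : Kˣ) : K) • s)) := by
            rw [mul_smul, TensorProduct.tmul_smul]
          rw [h2]; dsimp only
          have hm := RR_smul_K ((q ^ a i : Kˣ) : K) (mem_RR_Y (b := b) (XpD K q a * Se K q (rep c)) ((rep c)⁻¹ i) s)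
          rw [smul_sub] at hm
          exact hm
      | Yinv i =>
          rw [σMo_single]
          show YeInv K q i • _ - σMo K N q b S (genAct K q b S (.Yinv i) _) ∈ _
          rw [genAct_Yinv, σMo_single, smul_tmul_mul, ← mul_assoc, YeInv_mul_XpD,
            smul_mul_assoc, mul_assoc, YeInv_mul_Se, ← mul_assoc]
          rw [← TensorProduct.smul_tmul']
          have hwt : (((wt q ((a, c) : Idx K N b) i)⁻¹ : Kˣ) : K)
              = ((q ^ (-a i) : Kˣ) : K) * (((b ((rep c)⁻¹ i))⁻¹ : Kˣ) : K) := by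
            rw [wt, mul_inv, zpow_neg, Units.val_mul]
            rfl
          rw [hwt]
          have h2 : (XpD K q a * Se K q (rep c)) ⊗ₜ[K]
                ((((q ^ (-a i) : Kˣ) : K) * (((b ((rep c)⁻¹ i))⁻¹ : Kˣ) : K)) • s)
              = ((q ^ (-a i) : Kˣ) : K) • ((XpD K q a * Se K q (rep c)) ⊗ₜ[K]
                ((((b ((rep c)⁻¹ i))⁻¹ : Kˣ) : K) • s)) := by
            rw [mul_smul, TensorProduct.tmul_smul]
          rw [h2]; dsimp only
          have hm := RR_smul_K ((q ^ (-a i) : Kˣ) : K) (mem_RR_Yinv (b := b) (XpD K q a * Se K q (rep c)) ((rep c)⁻¹ i) s)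
          rw [smul_sub] at hm
          exact hm
      | S w =>
          rw [σMo_single]
          show Se K q w • _ - σMo K N q b S (genAct K q b S (.S w) _) ∈ _
          rw [genAct_S, σMo_single, smul_tmul_mul, ← mul_assoc, Se_mul_XpD, mul_assoc,
            rel_Smul]
          have hrep : w * rep c = rep (w • c) * (twst w c : Equiv.Perm (Fin N)) := by
            rw [twst, mul_inv_cancel_left]
          rw [hrep, ← rel_Smul, ← mul_assoc]
          exact mem_RR_S (XpD K q (a ∘ ⇑w⁻¹) * Se K q (rep (w • c))) (twst w c) s

/-- `d • σ(m) ≡ σ(d • m)` modulo the relations. -/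
lemma smul_σ_mem (d : SmashD K N q) (m : Mo K N b S) :
    d • σMo K N q b S m - σMo K N q b S (d • m) ∈ RR K N q b S := by
  obtain ⟨x, rfl⟩ := RingQuot.mkAlgHom_surjective K (SRel K N q) d
  revert m
  refine FreeAlgebra.induction K (SGen N)
    (motive := fun x => ∀ m : Mo K N b S,
      (RingQuot.mkAlgHom K (SRel K N q) x) • σMo K N q b S m
        - σMo K N q b S ((RingQuot.mkAlgHom K (SRel K N q) x) • m) ∈ RR K N q b S)
    ?_ ?_ ?_ ?_ x
  · intro k m
    rw [AlgHom.commutes]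
    rw [algebraMap_smul, algebraMap_smul_mo, map_smul, sub_self]
    exact Submodule.zero_mem _
  · intro g m
    have h := key_gen (q := q) g m
    have e : (RingQuot.mkAlgHom K (SRel K N q) (FreeAlgebra.ι K g)) • m
        = genAct K q b S g m := by
      rw [smul_mo_def, show FreeAlgebra.ι K g = sg K g from rfl, φD_mk, φA_sg]
    rw [e]
    exact h
  · intro x y hx hy m
    rw [map_mul, mul_smul, mul_smul]
    have h1 := Submodule.smul_mem (RR K N q b S) (RingQuot.mkAlgHom K (SRel K N q) x)
      (hy m)
    have h2 := hx ((RingQuot.mkAlgHom K (SRel K N q) y) • m)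
    have := Submodule.add_mem _ h1 h2
    convert this using 1
    rw [smul_sub]
    abel
  · intro x y hx hy m
    rw [map_add, add_smul, add_smul]
    have := Submodule.add_mem _ (hx m) (hy m)
    convert this using 1
    rw [map_add]
    abel

lemma sub_σψ_mem (x : SmashD K N q ⊗[K] S) :
    x - σMo K N q b S (ψ K N q b S x) ∈ RR K N q b S := by
  induction x using TensorProduct.induction_on with
  | zero => rw [map_zero, map_zero, sub_zero]; exact Submodule.zero_mem _
  | add x y hx hy =>
      have := Submodule.add_mem _ hx hy
      convert this using 1
      rw [map_add, map_add]
      abel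
  | tmul d s =>
      have h2 := smul_σ_mem (q := q) d (ηS K N b S s)
      have h1 : d ⊗ₜ[K] s - d • σMo K N q b S (ηS K N b S s) ∈ RR K N q b S := by
        rw [ηS_apply, σMo_single]
        show d ⊗ₜ[K] s - d • ((XpD K q (0 : Fin N → ℤ)
          * Se K q (rep (c1 K N b))) ⊗ₜ[K] _) ∈ _
        rw [XpD_zero, one_mul, smul_tmul_mul]
        have hmem := mem_RR_S (b := b) (q := q) d (vJ K N b) ((vJ K N b)⁻¹ • s)
        rw [smul_smul, mul_inv_cancel, one_smul] at hmem
        have := Submodule.neg_mem _ hmem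
        convert this using 1
        rw [neg_sub]
        rfl
      have hsum := Submodule.add_mem _ h1 h2
      convert hsum using 1
      have : ψ K N q b S (d ⊗ₜ[K] s) = d • ηS K N b S s := rfl
      rw [this]
      abel

lemma ker_ψ_le : LinearMap.ker (ψ K N q b S) ≤ RR K N q b S := by
  intro x hx
  rw [LinearMap.mem_ker] at hx
  have := sub_σψ_mem (q := q) (b := b) x
  rwa [hx, map_zero, sub_zero] at this

end Psi

end St14
namespace St14

section Simple

variable {K : Type} [Field K] {N : ℕ} {q : Kˣ} {b : Fin N → Kˣ}
variable {S : Type} [AddCommGroup S] [Module K S]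
  [DistribMulAction ↥(permStab K N b) S] [SMulCommClass ↥(permStab K N b) K S]

lemma q_zpow_inj (hq : ∀ m : ℕ, m ≠ 0 → (q : K) ^ m ≠ 1) {z z' : ℤ}
    (h : q ^ z = q ^ z') : z = z' := by
  by_contra hne
  have hd : q ^ (z - z') = 1 := by
    rw [zpow_sub, h, mul_inv_cancel]
  set d := z - z' with hdd
  have hdne : d ≠ 0 := sub_ne_zero_of_ne hne
  have hnat : q ^ (d.natAbs : ℤ) = 1 := by
    rcases Int.natAbs_eq d with h' | h'
    · rw [← h']; exact hd
    · rw [← neg_neg (d.natAbs : ℤ), ← h', zpow_neg, hd, inv_one]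
  have : ((q : K)) ^ (d.natAbs) = 1 := by
    have h2 : ((q ^ (d.natAbs : ℤ) : Kˣ) : K) = 1 := by rw [hnat]; rfl
    rw [zpow_natCast] at h2
    simpa using h2
  exact hq d.natAbs (Int.natAbs_ne_zero.mpr hdne) this

lemma wt_injective (hq : ∀ m : ℕ, m ≠ 0 → (q : K) ^ m ≠ 1)
    (hb : ∀ i j : Fin N, b i ≠ b j → ∀ z : ℤ, b i / b j ≠ q ^ z)
    (p p' : Idx K N b) (h : ∀ i, wt q p i = wt q p' i) : p = p' := by
  obtain ⟨a, c⟩ := p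
  obtain ⟨a', c'⟩ := p'
  have hwt : ∀ i, q ^ (a i) * βc c i = q ^ (a' i) * βc c' i := h
  have hβ : ∀ i, βc c i = βc c' i := by
    intro i
    by_contra hne
    have hratio : βc c i / βc c' i = q ^ (a' i - a i) := by
      refine div_eq_iff_eq_mul.mpr ?_
      apply mul_left_cancel (a := q ^ (a i))
      rw [hwt i, ← mul_assoc, ← zpow_add, show a i + (a' i - a i) = a' i from by ring]
    exact hb _ _ hne (a' i - a i) hratio
  have ha : a = a' := by
    funext i
    have h2 := hwt i
    rw [hβ i] at h2
    exact q_zpow_inj hq (mul_right_cancel h2)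
  have hc : c = c' := by
    have hmem : (rep c)⁻¹ * rep c' ∈ permStab K N b := by
      show ∀ i, b (((rep c)⁻¹ * rep c') i) = b i
      intro i
      rw [Equiv.Perm.mul_apply]
      have h1 : βc c ((rep c') i) = βc c' ((rep c') i) := hβ _
      rw [βc, βc] at h1
      rw [h1, Equiv.Perm.inv_apply_self]
    have heq : ((rep c : Equiv.Perm (Fin N)) : Qc K N b) = ((rep c' : Equiv.Perm (Fin N)) : Qc K N b) :=
      QuotientGroup.eq.mpr hmem
    rw [rep_spec, rep_spec] at heq
    exact heq
  rw [ha, hc]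

lemma smul_K_mem (V : Submodule (SmashD K N q) (Mo K N b S)) (k : K)
    {m : Mo K N b S} (hm : m ∈ V) : k • m ∈ V := by
  rw [← algebraMap_smul_mo k m]
  exact V.smul_mem _ hm

lemma exists_single_mem (hq : ∀ m : ℕ, m ≠ 0 → (q : K) ^ m ≠ 1)
    (hb : ∀ i j : Fin N, b i ≠ b j → ∀ z : ℤ, b i / b j ≠ q ^ z)
    (V : Submodule (SmashD K N q) (Mo K N b S)) :
    ∀ (n : ℕ) (m : Mo K N b S), m.support.card ≤ n → m ∈ V → m ≠ 0 →
      ∃ (p : Idx K N b) (s : S), s ≠ 0 ∧ Finsupp.single p s ∈ V := by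
  classical
  intro n
  induction n with
  | zero =>
      intro m hcard hm hne
      exfalso
      apply hne
      rw [← Finsupp.support_eq_empty]
      exact Finset.card_eq_zero.mp (Nat.le_zero.mp hcard)
  | succ n ih =>
      intro m hcard hm hne
      obtain ⟨k, hk⟩ := Finsupp.support_nonempty_iff.mpr hne
      by_cases hall : ∀ l ∈ m.support, l = k
      · refine ⟨k, m k, Finsupp.mem_support_iff.mp hk, ?_⟩
        have hmeq : m = Finsupp.single k (m k) := by
          ext p
          rcases eq_or_ne p k with hpk | hpk
          · subst hpk; rw [Finsupp.single_eq_same]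
          · rw [Finsupp.single_eq_of_ne' (Ne.symm hpk)]
            by_contra hp0
            exact hpk (hall p (Finsupp.mem_support_iff.mpr hp0))
        rw [← hmeq]
        exact hm
      · push_neg at hall
        obtain ⟨l, hl, hlk⟩ := hall
        have hkl : ¬ (∀ i, wt q l i = wt q k i) := fun hcon =>
          hlk (wt_injective hq hb l k hcon)
        push_neg at hkl
        obtain ⟨i, hi⟩ := hkl
        set m' : Mo K N b S := Ye K q i • m - ((wt q l i : K)) • m with hm'def
        have hm'mem : m' ∈ V :=
          Submodule.sub_mem _ (V.smul_mem _ hm) (smul_K_mem V _ hm)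
        have hap : ∀ p, m' p = ((wt q p i : K) - (wt q l i : K)) • m p := by
          intro p
          rw [hm'def, Finsupp.sub_apply, Ye_smul_apply, Finsupp.smul_apply, sub_smul]
        have hsub : m'.support ⊆ m.support.erase l := by
          intro p hp
          rw [Finsupp.mem_support_iff] at hp
          refine Finset.mem_erase.mpr ⟨?_, ?_⟩
          · rintro rfl
            exact hp (by rw [hap, sub_self, zero_smul])
          · rw [Finsupp.mem_support_iff]
            intro h0
            exact hp (by rw [hap, h0, smul_zero])
        have hkmem : k ∈ m'.support := by
          rw [Finsupp.mem_support_iff, hap]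
          refine smul_ne_zero ?_ (Finsupp.mem_support_iff.mp hk)
          refine sub_ne_zero_of_ne ?_
          intro hv
          exact hi (Units.ext hv).symm
        have hm'ne : m' ≠ 0 := by
          intro h0
          rw [h0] at hkmem
          simp at hkmem
        have hcard' : m'.support.card ≤ n := by
          have h1 : m'.support.card ≤ (m.support.erase l).card :=
            Finset.card_le_card hsub
          have h2 : (m.support.erase l).card = m.support.card - 1 :=
            Finset.card_erase_of_mem hl
          have h3 : 1 ≤ m.support.card := Finset.card_pos.mpr ⟨l, hl⟩
          omega
        exact ih m' hcard' hm'mem hm'ne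

lemma Se_single_zero_c1 (c : Qc K N b) (s : S) :
    Se K q (rep c) • Finsupp.single ((0, c1 K N b) : Idx K N b) ((vJ K N b)⁻¹ • s)
      = Finsupp.single ((0, c) : Idx K N b) s := by
  rw [Se_smul]
  have hc : rep c • c1 K N b = c := by
    rw [show c1 K N b = ((1 : Equiv.Perm (Fin N)) : Qc K N b) from rfl, coe_smul, mul_one,
      rep_spec]
  have ht : twst (rep c) (c1 K N b) = vJ K N b := by
    apply Subtype.ext
    show (rep (rep c • c1 K N b))⁻¹ * (rep c * rep (c1 K N b)) = rep (c1 K N b)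
    rw [hc]
    group
  rw [hc, ht, smul_smul, mul_inv_cancel, one_smul]
  congr 1

lemma gen_top (V : Submodule (SmashD K N q) (Mo K N b S))
    (h : ∀ s : S, Finsupp.single ((0, c1 K N b) : Idx K N b) s ∈ V) : V = ⊤ := by
  have hsingle : ∀ (a : Fin N → ℤ) (c : Qc K N b) (s : S),
      Finsupp.single ((a, c) : Idx K N b) s ∈ V := by
    intro a c s
    have h0 : Finsupp.single ((0, c) : Idx K N b) s ∈ V := by
      have := V.smul_mem (Se K q (rep c)) (h ((vJ K N b)⁻¹ • s))
      rwa [Se_single_zero_c1] at this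
    have := V.smul_mem (XpD K q a) h0
    rwa [XpD_smul, zero_add] at this
  rw [eq_top_iff]
  intro m hm
  clear hm
  induction m using Finsupp.induction_linear with
  | zero => exact V.zero_mem
  | add f g hf hg => exact V.add_mem hf hg
  | single p s =>
      obtain ⟨a, c⟩ := p
      exact hsingle a c s

lemma smul_ne_zero_of_ne {g : ↥(permStab K N b)} {s : S} (hs : s ≠ 0) : g • s ≠ 0 := by
  intro h0
  apply hs
  rw [← inv_smul_smul g s, h0, smul_zero]

lemma mo_simple (hq : ∀ m : ℕ, m ≠ 0 → (q : K) ^ m ≠ 1)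
    (hb : ∀ i j : Fin N, b i ≠ b j → ∀ z : ℤ, b i / b j ≠ q ^ z)
    (hS0 : Nontrivial S)
    (hSsimple : ∀ p : Submodule K S,
      (∀ (w : ↥(permStab K N b)) (x : S), x ∈ p → w • x ∈ p) → p = ⊥ ∨ p = ⊤) :
    IsSimpleModule (SmashD K N q) (Mo K N b S) := by
  classical
  obtain ⟨s0, hs0⟩ := exists_ne (0 : S)
  haveI : Nontrivial (Mo K N b S) :=
    ⟨⟨Finsupp.single ((0, c1 K N b) : Idx K N b) s0, 0, by
      simp [Ne, Finsupp.single_eq_zero, hs0]⟩⟩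
  refine { eq_bot_or_eq_top := fun V => ?_ }
  by_cases hV : V = ⊥
  · exact Or.inl hV
  refine Or.inr ?_
  obtain ⟨m, hmV, hmne⟩ := Submodule.exists_mem_ne_zero_of_ne_bot hV
  obtain ⟨p, s, hs, hpV⟩ := exists_single_mem hq hb V m.support.card m le_rfl hmV hmne
  obtain ⟨a, c⟩ := p
  -- move the single to the base point
  have h1 := V.smul_mem (Se K q (rep c)⁻¹) hpV
  rw [Se_smul] at h1
  have hcc : (rep c)⁻¹ • c = c1 K N b := by
    calc (rep c)⁻¹ • c = (rep c)⁻¹ • ((rep c : Equiv.Perm (Fin N)) : Qc K N b) := by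
          rw [rep_spec]
      _ = c1 K N b := by
          show ((((rep c)⁻¹ * rep c : Equiv.Perm (Fin N))) : Qc K N b) = c1 K N b
          rw [inv_mul_cancel]
          rfl
  rw [hcc] at h1
  have hidx : a ∘ ⇑((rep c)⁻¹)⁻¹ = a ∘ ⇑(rep c) := by rw [inv_inv]
  rw [hidx] at h1
  have h2 := V.smul_mem (XpD K q (-(a ∘ ⇑(rep c)))) h1
  rw [XpD_smul, add_neg_cancel] at h2
  set s1 := twst (rep c)⁻¹ c • s with hs1def
  have hs1 : s1 ≠ 0 := smul_ne_zero_of_ne hs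
  -- the submodule of S
  let T : Submodule K S :=
    { carrier := {t | Finsupp.single ((0, c1 K N b) : Idx K N b) t ∈ V}
      add_mem' := by
        intro t t' ht ht'
        show Finsupp.single _ (t + t') ∈ V
        rw [Finsupp.single_add]
        exact V.add_mem ht ht'
      zero_mem' := by
        show Finsupp.single _ (0 : S) ∈ V
        rw [Finsupp.single_zero]
        exact V.zero_mem
      smul_mem' := by
        intro k t ht
        show Finsupp.single _ (k • t) ∈ V
        rw [← Finsupp.smul_single]
        exact smul_K_mem V k ht }
  have hTW : ∀ (w : ↥(permStab K N b)) (t : S), t ∈ T → w • t ∈ T := by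
    intro w t ht
    show Finsupp.single _ (w • t) ∈ V
    have hg := V.smul_mem (Se K q ((vJ K N b * w * (vJ K N b)⁻¹ :
      ↥(permStab K N b)) : Equiv.Perm (Fin N))) ht
    rw [Se_smul] at hg
    have hc1 : ((vJ K N b * w * (vJ K N b)⁻¹ : ↥(permStab K N b)) : Equiv.Perm (Fin N))
        • c1 K N b = c1 K N b := smul_coset_one _
    have htw : twst ((vJ K N b * w * (vJ K N b)⁻¹ :
        ↥(permStab K N b)) : Equiv.Perm (Fin N)) (c1 K N b) = w := by
      apply Subtype.ext
      show (rep (((vJ K N b * w * (vJ K N b)⁻¹ : ↥(permStab K N b)) :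
          Equiv.Perm (Fin N)) • c1 K N b))⁻¹
          * (((vJ K N b * w * (vJ K N b)⁻¹ : ↥(permStab K N b)) :
            Equiv.Perm (Fin N)) * rep (c1 K N b))
        = (w : Equiv.Perm (Fin N))
      rw [hc1]
      push_cast
      rw [← vJ_coe]
      group
    rw [hc1, htw] at hg
    convert hg using 2
    rfl
  have hTne : T ≠ ⊥ := by
    intro hTbot
    have : s1 ∈ T := h2
    rw [hTbot, Submodule.mem_bot] at this
    exact hs1 this
  rcases hSsimple T hTW with hT | hT
  · exact absurd hT hTne
  · refine gen_top V fun s => ?_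
    have : s ∈ T := by rw [hT]; trivial
    exact this

end Simple

end St14
theorem statement14 (K : Type) [Field K] [CharZero K] (N : ℕ) (hN : 1 ≤ N)
    (q : Kˣ) (hq : ∀ m : ℕ, m ≠ 0 → (q : K) ^ m ≠ 1)
    (b : Fin N → Kˣ)
    (hb : ∀ i j : Fin N, b i ≠ b j → ∀ z : ℤ, b i / b j ≠ q ^ z)
    (S : Type) [AddCommGroup S] [Module K S]
    [DistribMulAction ↥(permStab K N b) S]
    [SMulCommClass ↥(permStab K N b) K S]
    (hS0 : Nontrivial S)
    (hSsimple : ∀ p : Submodule K S,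
      (∀ (w : ↥(permStab K N b)) (x : S), x ∈ p → w • x ∈ p) → p = ⊥ ∨ p = ⊤) :
    IsSimpleModule (SmashD K N q) ((SmashD K N q ⊗[K] S) ⧸ indRelb K N q b S) := by
  classical
  have hk := St14.hker (K := K) (N := N) (q := q) (b := b) (S := S)
  have hinj : LinearMap.ker ((indRelb K N q b S).liftQ (St14.ψ K N q b S) hk) = ⊥ :=
    Submodule.ker_liftQ_eq_bot _ _ _ (St14.ker_ψ_le)
  have hsurj : LinearMap.range ((indRelb K N q b S).liftQ (St14.ψ K N q b S) hk) = ⊤ := by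
    rw [Submodule.range_liftQ]
    refine St14.gen_top _ fun s => ?_
    exact LinearMap.mem_range.mpr ⟨(1 : SmashD K N q) ⊗ₜ[K] ((St14.vJ K N b) • s), by
      rw [St14.ψ_one_tmul, inv_smul_smul]⟩
  haveI := St14.mo_simple (K := K) (N := N) (q := q) (b := b) (S := S) hq hb hS0 hSsimple
  exact IsSimpleModule.congr (LinearEquiv.ofBijective
    ((indRelb K N q b S).liftQ (St14.ψ K N q b S) hk)
    ⟨LinearMap.ker_eq_bot.mp hinj, LinearMap.range_eq_top.mp hsurj⟩)

end
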